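/- arXiv:2602.22094 — 2 statements merged into one kernel-verified Lean document; each statement's English description precedes it below -/
import Mathlib

section
/- For two places u and v of a Petri net with Boolean-valued markings (values in {0,1}), if the two-row linear system [p_u(h); p_v(h)] = [p_u(0); p_v(0)] + [C_u; C_v]·τ̃ + [s⁺_u; s⁺_v] − [s⁻_u; s⁻_v] with τ̃, s ≥ 0 has no real solution when constrained to p_u(h) = 1 and p_v(h) = 1, then no reachable marking has both places u and v true simultaneously; i.e., ¬p_u ∨ ¬p_v is an invariant of the system. -/
/-- Reachability with rebinding, as in the relaxed Petri-net system. -/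
inductive RebindReach {P T : Type*} (C : P → T → ℤ)
    (posReb negReb : P → Prop) : (P → ℤ) → (P → ℤ) → Prop
  | refl (m : P → ℤ) : RebindReach C posReb negReb m m
  | step (m m' m'' : P → ℤ) (t : T) (rp rm : P → ℕ)
      (hp : ∀ p, ¬ posReb p → rp p = 0)
      (hm : ∀ p, ¬ negReb p → rm p = 0)
      (hstep : ∀ p, m'' p = m' p + C p t + (rp p : ℤ) - (rm p : ℤ))
      (hprev : RebindReach C posReb negReb m m') :
      RebindReach C posReb negReb m m''

lemma rebind_state_eq {P T : Type*} [Fintype T]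
    (C : P → T → ℤ) (posReb negReb : P → Prop) (p0 ph : P → ℤ)
    (h : RebindReach C posReb negReb p0 ph) :
    ∃ (τ : T → ℕ) (sp sm : P → ℕ),
      (∀ p, ¬ posReb p → sp p = 0) ∧ (∀ p, ¬ negReb p → sm p = 0) ∧
      ∀ p, ph p = p0 p + (∑ t, C p t * (τ t : ℤ)) + (sp p : ℤ) - (sm p : ℤ) := by
  induction h with
  | refl =>
    exact ⟨fun _ => 0, fun _ => 0, fun _ => 0, fun _ _ => rfl, fun _ _ => rfl,
      by simp⟩
  | step m' m'' t rp rm hp hm hstep hprev ih =>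
    obtain ⟨τ, sp, sm, hsp, hsm, heq⟩ := ih
    classical
    refine ⟨fun t' => τ t' + if t' = t then 1 else 0,
      fun p => sp p + rp p, fun p => sm p + rm p, ?_, ?_, ?_⟩
    · intro p h; simp [hsp p h, hp p h]
    · intro p h; simp [hsm p h, hm p h]
    · intro p
      have hsum : (∑ t', C p t' * ((τ t' + if t' = t then 1 else 0 : ℕ) : ℤ))
          = (∑ t', C p t' * (τ t' : ℤ)) + C p t := by
        push_cast
        simp [mul_add, Finset.sum_add_distrib, mul_ite, mul_one, mul_zero,
          Finset.sum_ite_eq']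
      rw [hstep p, heq p, hsum]
      push_cast
      ring

/-- for Boolean-valued places `u` and `v`, if the two-row relaxed
system (rows `u` and `v` of `p_h = p_0 + C·τ̃ + s⁺ − s⁻`, with nonnegative
`τ̃` and slacks supported only on places permitting rebinding) has no real
solution with `p_u(h) = 1` and `p_v(h) = 1`, then no reachable marking has both
`u` and `v` true simultaneously: `¬p_u ∨ ¬p_v` is an invariant. -/
theorem two_row_infeasible_implies_mutex
    {P T : Type*} [Fintype T]
    (C : P → T → ℤ) (posReb negReb : P → Prop) (p0 : P → ℤ) (u v : P)
    (hinf : ¬ ∃ (τ : T → ℝ) (spu spv smu smv : ℝ),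
      (∀ t, 0 ≤ τ t) ∧ 0 ≤ spu ∧ 0 ≤ spv ∧ 0 ≤ smu ∧ 0 ≤ smv ∧
      (¬ posReb u → spu = 0) ∧ (¬ posReb v → spv = 0) ∧
      (¬ negReb u → smu = 0) ∧ (¬ negReb v → smv = 0) ∧
      (1 : ℝ) = (p0 u : ℝ) + (∑ t, (C u t : ℝ) * τ t) + spu - smu ∧
      (1 : ℝ) = (p0 v : ℝ) + (∑ t, (C v t : ℝ) * τ t) + spv - smv) :
    ∀ ph : P → ℤ, RebindReach C posReb negReb p0 ph →
      ¬ (ph u = 1 ∧ ph v = 1) := by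
  intro ph hreach ⟨hu, hv⟩
  obtain ⟨τ, sp, sm, hsp, hsm, heq⟩ :=
    rebind_state_eq C posReb negReb p0 ph hreach
  apply hinf
  refine ⟨fun t => (τ t : ℝ), (sp u : ℝ), (sp v : ℝ), (sm u : ℝ), (sm v : ℝ),
    fun t => by positivity, by positivity, by positivity, by positivity,
    by positivity,
    fun h => by exact_mod_cast congrArg Nat.cast (hsp u h),
    fun h => by exact_mod_cast congrArg Nat.cast (hsp v h),
    fun h => by exact_mod_cast congrArg Nat.cast (hsm u h),
    fun h => by exact_mod_cast congrArg Nat.cast (hsm v h), ?_, ?_⟩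
  · have := heq u
    rw [hu] at this
    exact_mod_cast congrArg (Int.cast : ℤ → ℝ) this |>.trans (by push_cast; ring)
  · have := heq v
    rw [hv] at this
    exact_mod_cast congrArg (Int.cast : ℤ → ℝ) this |>.trans (by push_cast; ring)
end

section
/- If for every action a of a planning problem, the effect of a can be expressed as adding the integer vector C(·,a) to the numeric state, and the goal requires state g, then the existence of a plan implies the integer vector g − s_0 lies in the cone (over nonnegative integers) generated by the columns of C; hence if g − s_0 is not in the rational cone generated by the columns of C, the planning problem is infeasible. -/
/-- if every action `a` adds the integer vector `C(·,a)` to the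
numeric state (applicability may further restrict firing), then existence of a
plan from `s0` to the goal state `g` implies that `g − s0` lies in the cone
over `ℕ` generated by the columns of `C`; hence if `g − s0` is not in the
rational cone generated by the columns of `C`, the problem is infeasible. -/
theorem plan_implies_goal_in_cone
    {P A : Type*} [Fintype A]
    (C : P → A → ℤ) (appl : A → (P → ℤ) → Prop) (s0 g : P → ℤ)
    (Reach : (P → ℤ) → (P → ℤ) → Prop)
    (hReach : Reach = Relation.ReflTransGen
      (fun s s' => ∃ a, appl a s ∧ s' = fun p => s p + C p a)) :
    (Reach s0 g →
      ∃ lam : A → ℕ, ∀ p, g p - s0 p = ∑ a, C p a * (lam a : ℤ)) ∧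
    ((¬ ∃ lam : A → ℚ, (∀ a, 0 ≤ lam a) ∧
        ∀ p, ((g p - s0 p : ℤ) : ℚ) = ∑ a, (C p a : ℚ) * lam a) →
      ¬ Reach s0 g) := by
  subst hReach
  have key : ∀ s : P → ℤ, Relation.ReflTransGen
      (fun s s' => ∃ a, appl a s ∧ s' = fun p => s p + C p a) s0 s →
      ∃ lam : A → ℕ, ∀ p, s p - s0 p = ∑ a, C p a * (lam a : ℤ) := by
    intro s h
    classical
    induction h with
    | refl => exact ⟨fun _ => 0, fun p => by simp⟩
    | tail hbc hstep ih =>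
      obtain ⟨lam, hlam⟩ := ih
      obtain ⟨a, _, rfl⟩ := hstep
      refine ⟨fun b => lam b + if b = a then 1 else 0, fun p => ?_⟩
      have := hlam p
      push_cast
      simp only [mul_add]
      rw [Finset.sum_add_distrib]
      have : (∑ b, C p b * (if b = a then (1:ℤ) else 0)) = C p a := by
        simp [mul_ite]
      omega
  refine ⟨key g, fun hnc hr => hnc ?_⟩
  obtain ⟨lam, hlam⟩ := key g hr
  refine ⟨fun a => (lam a : ℚ), fun a => by positivity, fun p => ?_⟩
  have := hlam p
  push_cast [this]
  ring
end
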